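/- Let $A$ be a positive semidefinite random $d\times d$ matrix with $\mathbb{A} = \mathbb{E}[A]$ positive definite, and suppose there is $L > 0$ such that $\mathbb{E}[\langle Ax, x\rangle^2]^{1/4} \leq L$ for all $x$ with $\langle \mathbb{A}x,x\rangle = 1$. Then $\|\mathbb{E}[A\mathbb{A}^{-1}A]\|_{\mathrm{op}} \leq d L^4$, where $\|\cdot\|_{\mathrm{op}}$ is the operator norm with respect to the norm $\|x\| = \langle \mathbb{A}x,x\rangle^{1/2}$. -/

import Mathlib

open MeasureTheory ProbabilityTheory Matrix

/-- The operator norm of a `d × d` matrix `B` with respect to the norm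
`x ↦ ⟨𝔸x, x⟩^{1/2}` endowed by a positive definite matrix `𝔸`. -/
noncomputable def opNormWrt {d : ℕ} (Abar B : Matrix (Fin d) (Fin d) ℝ) : ℝ :=
  sSup {t | ∃ x y : Fin d → ℝ,
    Abar.mulVec x ⬝ᵥ x ≤ 1 ∧ Abar.mulVec y ⬝ᵥ y ≤ 1 ∧ t = B.mulVec x ⬝ᵥ y}

/-- The entrywise expectation of a random matrix. -/
noncomputable def matExp {Ω : Type*} [MeasureSpace Ω] {d : ℕ}
    (A : Ω → Matrix (Fin d) (Fin d) ℝ) : Matrix (Fin d) (Fin d) ℝ :=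
  Matrix.of fun i j => ∫ ω, A ω i j ∂(MeasureTheory.volume : Measure Ω)

lemma cs_sq {a b c : ℝ} (h : ∀ t : ℝ, 0 ≤ a + 2 * b * t + c * t ^ 2) : b ^ 2 ≤ a * c := by
  have hd := discrim_le_zero (a := c) (b := 2 * b) (c := a) (fun t => by nlinarith [h t])
  rw [discrim] at hd; nlinarith

lemma cs_sqrt {a b c : ℝ} (ha : 0 ≤ a) (h : ∀ t : ℝ, 0 ≤ a + 2 * b * t + c * t ^ 2) :
    b ≤ Real.sqrt a * Real.sqrt c := by
  have hb2 := cs_sq h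
  calc b ≤ |b| := le_abs_self b
    _ = Real.sqrt (b ^ 2) := (Real.sqrt_sq_eq_abs b).symm
    _ ≤ Real.sqrt (a * c) := Real.sqrt_le_sqrt hb2
    _ = Real.sqrt a * Real.sqrt c := Real.sqrt_mul ha c

/-- For a real symmetric matrix, move it across the dot product. -/
lemma symm_dot {d : ℕ} {S : Matrix (Fin d) (Fin d) ℝ} (hS : Sᵀ = S)
    (v w : Fin d → ℝ) : S.mulVec v ⬝ᵥ w = v ⬝ᵥ S.mulVec w := by
  rw [Matrix.dotProduct_mulVec, ← Matrix.mulVec_transpose, hS, dotProduct_comm]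

/-- Cauchy-Schwarz for a "positive semidefinite" bilinear form given by a matrix. -/
lemma dot_quadratic_cs {d : ℕ} (M : Matrix (Fin d) (Fin d) ℝ)
    (hsym : ∀ v w : Fin d → ℝ, M.mulVec v ⬝ᵥ w = M.mulVec w ⬝ᵥ v)
    (hnn : ∀ v : Fin d → ℝ, 0 ≤ M.mulVec v ⬝ᵥ v) (v w : Fin d → ℝ) :
    M.mulVec v ⬝ᵥ w ≤ Real.sqrt (M.mulVec v ⬝ᵥ v) * Real.sqrt (M.mulVec w ⬝ᵥ w) := by
  apply cs_sqrt (hnn v)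
  intro t
  have h0 := hnn (v + t • w)
  have hexp : M.mulVec (v + t • w) ⬝ᵥ (v + t • w) =
      M.mulVec v ⬝ᵥ v + 2 * (M.mulVec v ⬝ᵥ w) * t + (M.mulVec w ⬝ᵥ w) * t ^ 2 := by
    rw [Matrix.mulVec_add, Matrix.mulVec_smul]
    simp only [add_dotProduct, smul_dotProduct, dotProduct_add,
      dotProduct_smul, smul_eq_mul]
    rw [hsym w v]; ring
  rwa [hexp] at h0

lemma psd_cs {d : ℕ} {S : Matrix (Fin d) (Fin d) ℝ} (hS : S.PosSemidef)
    (v w : Fin d → ℝ) : (S.mulVec v ⬝ᵥ w) ^ 2 ≤ (S.mulVec v ⬝ᵥ v) * (S.mulVec w ⬝ᵥ w) := by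
  have hsymm : Sᵀ = S := by
    rw [← Matrix.conjTranspose_eq_transpose_of_trivial]; exact hS.1
  apply cs_sq
  intro t
  have h0 := hS.re_dotProduct_nonneg (v + t • w)
  simp only [RCLike.re_to_real, star_trivial] at h0
  have hexp : (v + t • w) ⬝ᵥ S.mulVec (v + t • w) =
      S.mulVec v ⬝ᵥ v + 2 * (S.mulVec v ⬝ᵥ w) * t + (S.mulVec w ⬝ᵥ w) * t ^ 2 := by
    rw [Matrix.mulVec_add, Matrix.mulVec_smul]
    simp only [add_dotProduct, smul_dotProduct, dotProduct_add,
      dotProduct_smul, smul_eq_mul]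
    rw [← symm_dot hsymm v w, dotProduct_comm (S.mulVec v) v,
      dotProduct_comm (S.mulVec v) w, dotProduct_comm (S.mulVec w) w]
    ring
  rw [hexp] at h0
  exact h0

lemma int_dot {Ω : Type*} [MeasureSpace Ω] {d : ℕ}
    (A' : Ω → Matrix (Fin d) (Fin d) ℝ)
    (hi : ∀ i j, Integrable (fun ω => A' ω i j) (volume : Measure Ω))
    (x y : Fin d → ℝ) :
    Integrable (fun ω => (A' ω).mulVec x ⬝ᵥ y) (volume : Measure Ω) := by
  have hfun : (fun ω => (A' ω).mulVec x ⬝ᵥ y) =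
      fun ω => ∑ i, ∑ j, A' ω i j * x j * y i := by
    funext ω
    simp only [Matrix.mulVec, dotProduct, Finset.sum_mul, Finset.mul_sum]
  rw [hfun]
  exact integrable_finset_sum _ fun i _ =>
    integrable_finset_sum _ fun j _ => ((hi i j).mul_const _).mul_const _

lemma matExp_dot {Ω : Type*} [MeasureSpace Ω] {d : ℕ}
    (A' : Ω → Matrix (Fin d) (Fin d) ℝ)
    (hi : ∀ i j, Integrable (fun ω => A' ω i j) (volume : Measure Ω))
    (x y : Fin d → ℝ) :
    (matExp A').mulVec x ⬝ᵥ y = ∫ ω, (A' ω).mulVec x ⬝ᵥ y ∂(volume : Measure Ω) := by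
  have hfun : ∀ (M : Matrix (Fin d) (Fin d) ℝ),
      M.mulVec x ⬝ᵥ y = ∑ i, ∑ j, M i j * x j * y i := by
    intro M
    simp only [Matrix.mulVec, dotProduct, Finset.sum_mul, Finset.mul_sum]
  simp_rw [hfun]
  rw [integral_finset_sum]
  · refine Finset.sum_congr rfl fun i _ => ?_
    rw [integral_finset_sum]
    · refine Finset.sum_congr rfl fun j _ => ?_
      have : (fun ω => A' ω i j * x j * y i) = fun ω => A' ω i j * (x j * y i) := by
        funext ω; ring
      rw [this, integral_mul_const]
      simp [matExp, mul_assoc]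
    · exact fun j _ => ((hi i j).mul_const _).mul_const _
  · intro i _
    exact integrable_finset_sum _ fun j _ => ((hi i j).mul_const _).mul_const _

/-- Under the `L₄`-`L₂` norm equivalence `E[⟨Ax,x⟩²]^{1/4} ≤ L` on the unit sphere of
the norm endowed by `𝔸 = E[A]`, one has `‖E[A𝔸⁻¹A]‖ₒₚ ≤ d L⁴`. -/
theorem opNorm_expectation_le_of_norm_equiv
    {Ω : Type*} [MeasureSpace Ω] [IsProbabilityMeasure (ℙ : Measure Ω)]
    {d : ℕ} (hd : 0 < d) (A : Ω → Matrix (Fin d) (Fin d) ℝ) (L : ℝ) (hL : 0 < L)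
    (hmeas : ∀ i j, Measurable fun ω => A ω i j)
    (hpsd : ∀ ω, (A ω).PosSemidef)
    (hL2 : ∀ i j, MemLp (fun ω => A ω i j) 2 ℙ)
    (hposdef : (matExp A).PosDef)
    (hint : ∀ i j, Integrable (fun ω => (A ω * (matExp A)⁻¹ * A ω) i j) ℙ)
    (hnormequiv : ∀ x : Fin d → ℝ, (matExp A).mulVec x ⬝ᵥ x = 1 →
      (∫ ω, ((A ω).mulVec x ⬝ᵥ x) ^ 2 ∂ℙ) ^ ((1 : ℝ) / 4) ≤ L) :
    opNormWrt (matExp A) (matExp fun ω => A ω * (matExp A)⁻¹ * A ω) ≤ d * L ^ 4 := by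
  classical
  have hdL4 : (0:ℝ) ≤ (d:ℝ) * L ^ 4 := by positivity
  -- transpose facts
  have hAt : ∀ ω, (A ω)ᵀ = A ω := fun ω => by
    rw [← Matrix.conjTranspose_eq_transpose_of_trivial]; exact (hpsd ω).1
  have h𝔸t : (matExp A)ᵀ = matExp A := by
    rw [← Matrix.conjTranspose_eq_transpose_of_trivial]; exact hposdef.1
  -- decomposition of the inverse
  obtain ⟨T, hT⟩ : ∃ T : Matrix (Fin d) (Fin d) ℝ, (matExp A)⁻¹ = Tᴴ * T := by
    open scoped MatrixOrder in
    exact CStarAlgebra.nonneg_iff_eq_star_mul_self.mp hposdef.inv.posSemidef.nonneg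
  have hTt : (matExp A)⁻¹ = Tᵀ * T := by
    rwa [Matrix.conjTranspose_eq_transpose_of_trivial] at hT
  have hAdet : IsUnit (matExp A).det := (Matrix.isUnit_iff_isUnit_det _).mp hposdef.isUnit
  have hTdet : IsUnit T.det := by
    have h2 : IsUnit ((matExp A)⁻¹).det := (Matrix.isUnit_iff_isUnit_det _).mp hposdef.inv.isUnit
    rw [hTt, Matrix.det_mul, Matrix.det_transpose] at h2
    exact isUnit_of_mul_isUnit_left h2
  have hTAT : T * matExp A * Tᵀ = 1 := by
    have hA_eq : matExp A = T⁻¹ * Tᵀ⁻¹ := by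
      have h3 : ((matExp A)⁻¹)⁻¹ = matExp A := Matrix.nonsing_inv_nonsing_inv _ hAdet
      rw [← h3, hTt, Matrix.mul_inv_rev]
    rw [hA_eq]
    simp only [Matrix.mul_assoc]
    rw [Matrix.nonsing_inv_mul _ (by rwa [Matrix.det_transpose] : IsUnit Tᵀ.det),
      Matrix.mul_one, Matrix.mul_nonsing_inv _ hTdet]
  have hTnorm : ∀ i, (matExp A).mulVec (T i) ⬝ᵥ (T i) = 1 := by
    intro i
    have h1 : (T * matExp A * Tᵀ) i i = 1 := by rw [hTAT]; simp [Matrix.one_apply]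
    rw [← h1]
    simp only [Matrix.mul_apply, Matrix.mulVec, dotProduct, Matrix.transpose_apply,
      Finset.sum_mul, Finset.mul_sum]
    rw [Finset.sum_comm]
    refine Finset.sum_congr rfl fun j _ => Finset.sum_congr rfl fun k _ => by ring
  -- pointwise identity
  have hq_eq : ∀ ω (x : Fin d → ℝ),
      (A ω * (matExp A)⁻¹ * A ω).mulVec x ⬝ᵥ x
        = ∑ i, ((A ω).mulVec (T i) ⬝ᵥ x) ^ 2 := by
    intro ω x
    rw [hTt]
    have h1 : (A ω * (Tᵀ * T) * A ω).mulVec x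
        = (A ω).mulVec (Tᵀ.mulVec (T.mulVec ((A ω).mulVec x))) := by
      rw [Matrix.mulVec_mulVec, Matrix.mulVec_mulVec, Matrix.mulVec_mulVec]
      simp only [Matrix.mul_assoc]
    rw [h1, symm_dot (hAt ω), dotProduct_comm,
      Matrix.dotProduct_mulVec, Matrix.vecMul_transpose]
    have h2 : ∀ i, (T.mulVec ((A ω).mulVec x)) i = (A ω).mulVec (T i) ⬝ᵥ x := by
      intro i
      rw [symm_dot (hAt ω)]
      rfl
    simp only [dotProduct, h2, sq]
  -- the quadratic form functions
  set g : (Fin d → ℝ) → Ω → ℝ := fun v ω => (A ω).mulVec v ⬝ᵥ v with hg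
  have hgnn : ∀ v ω, 0 ≤ g v ω := by
    intro v ω
    have h0 := (hpsd ω).re_dotProduct_nonneg v
    simpa [hg, RCLike.re_to_real, star_trivial, dotProduct_comm] using h0
  have hg2 : ∀ v, MemLp (g v) 2 ℙ := by
    intro v
    have hgv : g v = fun ω => ∑ i, ∑ j, (v j * v i) * A ω i j := by
      funext ω
      simp only [hg, Matrix.mulVec, dotProduct, Finset.sum_mul, Finset.mul_sum]
      exact Finset.sum_congr rfl fun i _ => Finset.sum_congr rfl fun j _ => by ring
    rw [hgv]
    exact memLp_finsetSum _ fun i _ => memLp_finsetSum _ fun j _ =>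
      (hL2 i j).const_mul _
  have hmul : ∀ v w, Integrable (fun ω => g v ω * g w ω) ℙ := by
    intro v w
    have hpqr : (1 : ENNReal) / 1 = 1 / 2 + 1 / 2 := by
      rw [div_one]; exact (ENNReal.add_halves 1).symm
    have h : MemLp (g w • g v) 1 ℙ := (hg2 v).smul (hg2 w)
    have h2 := memLp_one_iff_integrable.mp h
    exact (by simpa [Pi.smul_apply, smul_eq_mul, mul_comm] using h2 : Integrable (g v * g w) ℙ)
  have hL4 : ∀ v, (matExp A).mulVec v ⬝ᵥ v = 1 → ∫ ω, (g v ω) ^ 2 ∂ℙ ≤ L ^ 4 := by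
    intro v hv
    have h := hnormequiv v hv
    have hnn : 0 ≤ ∫ ω, (g v ω) ^ 2 ∂ℙ := integral_nonneg fun ω => sq_nonneg _
    have key : ((∫ ω, (g v ω) ^ 2 ∂ℙ) ^ ((1:ℝ)/4)) ^ (4:ℕ) = ∫ ω, (g v ω) ^ 2 ∂ℙ := by
      rw [← Real.rpow_natCast ((∫ ω, (g v ω) ^ 2 ∂ℙ) ^ ((1:ℝ)/4)) 4, ← Real.rpow_mul hnn]
      norm_num
    calc ∫ ω, (g v ω) ^ 2 ∂ℙ = ((∫ ω, (g v ω) ^ 2 ∂ℙ) ^ ((1:ℝ)/4)) ^ (4:ℕ) := key.symm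
      _ ≤ L ^ (4:ℕ) := pow_le_pow_left₀ (Real.rpow_nonneg hnn _) h 4
      _ = L ^ 4 := by norm_num
  set f : Ω → ℝ := fun ω => ∑ i, g (T i) ω with hf
  have hf2 : MemLp f 2 ℙ := memLp_finsetSum _ fun i _ => hg2 _
  have hgsq_int : ∀ v, Integrable (fun ω => (g v ω) ^ 2) ℙ := fun v => by
    simpa [sq] using hmul v v
  have hfsq_int : Integrable (fun ω => f ω ^ 2) ℙ := hf2.integrable_sq
  have hfg_int : ∀ x, Integrable (fun ω => f ω * g x ω) ℙ := by
    intro x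
    have hcongr : (fun ω => f ω * g x ω) = fun ω => ∑ i, g (T i) ω * g x ω := by
      funext ω; rw [hf, Finset.sum_mul]
    rw [hcongr]; exact integrable_finset_sum _ fun i _ => hmul _ _
  have hfL : ∫ ω, f ω ^ 2 ∂ℙ ≤ ((d:ℝ) * L ^ 2) ^ 2 := by
    have hpt : ∀ ω, f ω ^ 2 ≤ (d:ℝ) * ∑ i, (g (T i) ω) ^ 2 := by
      intro ω
      have h := sq_sum_le_card_mul_sum_sq
        (s := (Finset.univ : Finset (Fin d))) (f := fun i => g (T i) ω)
      simpa [hf] using h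
    have hsum_int : Integrable (fun ω => ∑ i, (g (T i) ω) ^ 2) ℙ :=
      integrable_finset_sum _ fun i _ => hgsq_int _
    calc ∫ ω, f ω ^ 2 ∂ℙ ≤ ∫ ω, (d:ℝ) * ∑ i, (g (T i) ω) ^ 2 ∂ℙ :=
        integral_mono hfsq_int (hsum_int.const_mul _) hpt
      _ = (d:ℝ) * ∑ i, ∫ ω, (g (T i) ω) ^ 2 ∂ℙ := by
        rw [integral_const_mul, integral_finset_sum _ fun i _ => hgsq_int (T i)]
      _ ≤ (d:ℝ) * ∑ _i : Fin d, L ^ 4 :=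
        mul_le_mul_of_nonneg_left (Finset.sum_le_sum fun i _ => hL4 _ (hTnorm i))
          (by positivity)
      _ = ((d:ℝ) * L ^ 2) ^ 2 := by
        simp only [Finset.sum_const, Finset.card_univ, Fintype.card_fin, nsmul_eq_mul]
        ring
  have hcore : ∀ x, (matExp A).mulVec x ⬝ᵥ x = 1 →
      (matExp fun ω => A ω * (matExp A)⁻¹ * A ω).mulVec x ⬝ᵥ x ≤ (d:ℝ) * L ^ 4 := by
    intro x hx
    rw [matExp_dot _ hint x x]
    have hq_int : Integrable (fun ω => (A ω * (matExp A)⁻¹ * A ω).mulVec x ⬝ᵥ x) ℙ :=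
      int_dot _ hint x x
    have hpt : ∀ ω, (A ω * (matExp A)⁻¹ * A ω).mulVec x ⬝ᵥ x ≤ f ω * g x ω := by
      intro ω
      rw [hq_eq ω x]
      calc ∑ i, ((A ω).mulVec (T i) ⬝ᵥ x) ^ 2
          ≤ ∑ i, g (T i) ω * g x ω :=
            Finset.sum_le_sum fun i _ => psd_cs (hpsd ω) (T i) x
        _ = f ω * g x ω := by rw [hf, Finset.sum_mul]
    have h1 : ∫ ω, (A ω * (matExp A)⁻¹ * A ω).mulVec x ⬝ᵥ x ∂ℙ ≤ ∫ ω, f ω * g x ω ∂ℙ :=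
      integral_mono hq_int (hfg_int x) hpt
    have hcs : ∫ ω, f ω * g x ω ∂ℙ
        ≤ Real.sqrt (∫ ω, f ω ^ 2 ∂ℙ) * Real.sqrt (∫ ω, (g x ω) ^ 2 ∂ℙ) := by
      apply cs_sqrt (integral_nonneg fun ω => sq_nonneg _)
      intro t
      have hval : ∫ ω, (f ω + t * g x ω) ^ 2 ∂ℙ
          = (∫ ω, f ω ^ 2 ∂ℙ) + 2 * (∫ ω, f ω * g x ω ∂ℙ) * t
            + (∫ ω, (g x ω) ^ 2 ∂ℙ) * t ^ 2 := by
        have hexp : (fun ω => (f ω + t * g x ω) ^ 2)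
            = fun ω => f ω ^ 2 + ((2 * t) * (f ω * g x ω) + t ^ 2 * (g x ω ^ 2)) := by
          funext ω; ring
        have hInt2 : Integrable (fun ω => (2 * t) * (f ω * g x ω) + t ^ 2 * (g x ω ^ 2)) ℙ :=
          ((hfg_int x).const_mul _).add ((hgsq_int x).const_mul _)
        rw [hexp, integral_add hfsq_int hInt2,
          integral_add ((hfg_int x).const_mul (2 * t)) ((hgsq_int x).const_mul (t ^ 2)),
          integral_const_mul, integral_const_mul]
        ring
      have h0 : 0 ≤ ∫ ω, (f ω + t * g x ω) ^ 2 ∂ℙ := integral_nonneg fun ω => sq_nonneg _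
      rw [hval] at h0
      exact h0
    have hs1 : Real.sqrt (∫ ω, f ω ^ 2 ∂ℙ) ≤ (d:ℝ) * L ^ 2 := by
      calc Real.sqrt (∫ ω, f ω ^ 2 ∂ℙ) ≤ Real.sqrt (((d:ℝ) * L ^ 2) ^ 2) :=
          Real.sqrt_le_sqrt hfL
        _ = (d:ℝ) * L ^ 2 := Real.sqrt_sq (by positivity)
    have hs2 : Real.sqrt (∫ ω, (g x ω) ^ 2 ∂ℙ) ≤ L ^ 2 := by
      have hle : ∫ ω, (g x ω) ^ 2 ∂ℙ ≤ (L ^ 2) ^ 2 := by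
        have := hL4 x hx; nlinarith
      calc Real.sqrt (∫ ω, (g x ω) ^ 2 ∂ℙ) ≤ Real.sqrt ((L ^ 2) ^ 2) := Real.sqrt_le_sqrt hle
        _ = L ^ 2 := Real.sqrt_sq (by positivity)
    calc ∫ ω, (A ω * (matExp A)⁻¹ * A ω).mulVec x ⬝ᵥ x ∂ℙ ≤ ∫ ω, f ω * g x ω ∂ℙ := h1
      _ ≤ Real.sqrt (∫ ω, f ω ^ 2 ∂ℙ) * Real.sqrt (∫ ω, (g x ω) ^ 2 ∂ℙ) := hcs
      _ ≤ ((d:ℝ) * L ^ 2) * L ^ 2 :=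
        mul_le_mul hs1 hs2 (Real.sqrt_nonneg _) (by positivity)
      _ = (d:ℝ) * L ^ 4 := by ring
  have hMnn : ∀ z, 0 ≤ (matExp fun ω => A ω * (matExp A)⁻¹ * A ω).mulVec z ⬝ᵥ z := by
    intro z
    rw [matExp_dot _ hint z z]
    refine integral_nonneg fun ω => ?_
    rw [hq_eq ω z]
    exact Finset.sum_nonneg fun i _ => sq_nonneg _
  have hMsym : ∀ v w, (matExp fun ω => A ω * (matExp A)⁻¹ * A ω).mulVec v ⬝ᵥ w
      = (matExp fun ω => A ω * (matExp A)⁻¹ * A ω).mulVec w ⬝ᵥ v := by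
    intro v w
    rw [matExp_dot _ hint v w, matExp_dot _ hint w v]
    have hptw : ∀ ω, (A ω * (matExp A)⁻¹ * A ω).mulVec v ⬝ᵥ w
        = (A ω * (matExp A)⁻¹ * A ω).mulVec w ⬝ᵥ v := by
      intro ω
      have hBt : ((matExp A)⁻¹)ᵀ = (matExp A)⁻¹ := by
        rw [Matrix.transpose_nonsing_inv, h𝔸t]
      have hSt : (A ω * (matExp A)⁻¹ * A ω)ᵀ = A ω * (matExp A)⁻¹ * A ω := by
        rw [Matrix.transpose_mul, Matrix.transpose_mul, hAt, hBt, ← Matrix.mul_assoc]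
      rw [symm_dot hSt, dotProduct_comm]
    simp_rw [hptw]
  have hscale : ∀ x, (matExp A).mulVec x ⬝ᵥ x ≤ 1 →
      (matExp fun ω => A ω * (matExp A)⁻¹ * A ω).mulVec x ⬝ᵥ x ≤ (d:ℝ) * L ^ 4 := by
    intro x hx1
    rcases eq_or_ne x 0 with rfl | hx
    · simpa using hdL4
    · have hc : 0 < (matExp A).mulVec x ⬝ᵥ x := by
        have h := hposdef.re_dotProduct_pos hx
        simpa [dotProduct_comm] using h
      have hsc : 0 < Real.sqrt ((matExp A).mulVec x ⬝ᵥ x) := Real.sqrt_pos.mpr hc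
      set s := Real.sqrt ((matExp A).mulVec x ⬝ᵥ x) with hsdef
      have hss : s * s = (matExp A).mulVec x ⬝ᵥ x := Real.mul_self_sqrt hc.le
      have hx' : (matExp A).mulVec (s⁻¹ • x) ⬝ᵥ (s⁻¹ • x) = 1 := by
        rw [Matrix.mulVec_smul]
        simp only [smul_dotProduct, dotProduct_smul, smul_eq_mul]
        rw [← hss]
        field_simp
      have h2 := hcore _ hx'
      rw [Matrix.mulVec_smul] at h2
      simp only [smul_dotProduct, dotProduct_smul, smul_eq_mul] at h2
      have key : (matExp fun ω => A ω * (matExp A)⁻¹ * A ω).mulVec x ⬝ᵥ x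
          = (s * s) * (s⁻¹ * (s⁻¹ *
            ((matExp fun ω => A ω * (matExp A)⁻¹ * A ω).mulVec x ⬝ᵥ x))) := by
        field_simp
      calc (matExp fun ω => A ω * (matExp A)⁻¹ * A ω).mulVec x ⬝ᵥ x
          = (s * s) * (s⁻¹ * (s⁻¹ *
            ((matExp fun ω => A ω * (matExp A)⁻¹ * A ω).mulVec x ⬝ᵥ x))) := key
        _ ≤ (s * s) * ((d:ℝ) * L ^ 4) :=
          mul_le_mul_of_nonneg_left h2 (by positivity)
        _ ≤ 1 * ((d:ℝ) * L ^ 4) := by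
          apply mul_le_mul_of_nonneg_right _ hdL4
          rw [hss]; exact hx1
        _ = (d:ℝ) * L ^ 4 := one_mul _
  rw [opNormWrt]
  apply Real.sSup_le _ hdL4
  rintro t ⟨x, y, hx, hy, rfl⟩
  have h1 := dot_quadratic_cs _ hMsym hMnn x y
  calc (matExp fun ω => A ω * (matExp A)⁻¹ * A ω).mulVec x ⬝ᵥ y
      ≤ Real.sqrt ((matExp fun ω => A ω * (matExp A)⁻¹ * A ω).mulVec x ⬝ᵥ x)
        * Real.sqrt ((matExp fun ω => A ω * (matExp A)⁻¹ * A ω).mulVec y ⬝ᵥ y) := h1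
    _ ≤ Real.sqrt ((d:ℝ) * L ^ 4) * Real.sqrt ((d:ℝ) * L ^ 4) :=
      mul_le_mul (Real.sqrt_le_sqrt (hscale x hx)) (Real.sqrt_le_sqrt (hscale y hy))
        (Real.sqrt_nonneg _) (Real.sqrt_nonneg _)
    _ = (d:ℝ) * L ^ 4 := Real.mul_self_sqrt hdL4
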